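/- Let v be a vertex of T, let S be the subtree of T consisting of v and all its descendants, and let T(v) be the highest vertex of the decomposition D whose root is v (the largest decomposition subtree rooted at v). Then the vertex set of T(v) is a memory interval, and every vertex of T(v) precedes, in vEB_ε(T), every vertex of S \ T(v); that is, T(v) is exactly the memory-first maximal memory interval contained in S. -/

import Mathlib

namespace VEB

inductive OTree : Type where
  | node : List OTree → OTree

def OTree.children : OTree → List OTree
  | .node cs => cs

mutual
  def height : OTree → ℕ
    | .node cs => 1 + heightList cs
  def heightList : List OTree → ℕ
    | [] => 0
    | c :: cs => max (height c) (heightList cs)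
end

def subtreeAt? : OTree → List ℕ → Option OTree
  | t, [] => some t
  | t, i :: p =>
    match t.children[i]? with
    | some c => subtreeAt? c p
    | none => none

/-- `p` is (the path of) a vertex of `t`. -/
def IsVertex (t : OTree) (p : List ℕ) : Prop := (subtreeAt? t p).isSome

/-- `p` is a leaf of `t`. -/
def IsLeaf (t : OTree) (p : List ℕ) : Prop := subtreeAt? t p = some (.node [])

/-- All leaves of `t` are at the same depth (the bottom level). -/
def Uniform (t : OTree) : Prop := ∀ p, IsLeaf t p → p.length + 1 = height t

/-- The top `m+1` levels of `t` (the truncation of height `m+1`). -/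
def trunc : ℕ → OTree → OTree
  | 0, _ => .node []
  | m+1, t => .node (t.children.map (trunc m))

/-- Paths of the vertices at depth `m`, in left-to-right order. -/
def levelPaths : ℕ → OTree → List (List ℕ)
  | 0, _ => [[]]
  | m+1, t => (t.children.zipIdx.map fun ic => (levelPaths m ic.1).map (ic.2 :: ·)).flatten

/-- The level at which a tree of height `h` is cut: `max ⌊ε h⌋ 1`. -/
noncomputable def cutLevel (ε : ℝ) (h : ℕ) : ℕ := max ⌊ε * (h : ℝ)⌋₊ 1

/-- The van Emde Boas order of the vertex paths of `t` (with recursion fuel). -/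
noncomputable def vEBAux (ε : ℝ) : ℕ → OTree → List (List ℕ)
  | 0, _ => []
  | fuel+1, t =>
    if height t ≤ 1 then [[]]
    else
      let m := cutLevel ε (height t)
      vEBAux ε fuel (trunc (m - 1) t) ++
        ((levelPaths m t).map fun q =>
          match subtreeAt? t q with
          | some s => (vEBAux ε fuel s).map (q ++ ·)
          | none => []).flatten

/-- The van Emde Boas order `vEB_ε(t)` of the vertex paths of `t`. -/
noncomputable def vEB (ε : ℝ) (t : OTree) : List (List ℕ) := vEBAux ε (height t) t

/-- Position (index) of vertex `p` in the van Emde Boas order. -/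
noncomputable def pos (ε : ℝ) (t : OTree) (p : List ℕ) : ℕ := (vEB ε t).idxOf p

/-- `A` is a set of vertices occupying consecutive positions in `vEB_ε(t)`. -/
def MemInterval (ε : ℝ) (t : OTree) (A : Set (List ℕ)) : Prop :=
  ∃ i n, A = {p | p ∈ ((vEB ε t).drop i).take n}

/-- The vertices of the decomposition `D` of `t`: pairs `(p, k)` of the root path
and the height of a decomposition subtree (with recursion fuel). -/
noncomputable def decompAux (ε : ℝ) : ℕ → OTree → List (List ℕ × ℕ)
  | 0, _ => []
  | fuel+1, t =>
    if height t ≤ 1 then [([], 1)]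
    else
      let m := cutLevel ε (height t)
      ([], height t) ::
        (decompAux ε fuel (trunc (m - 1) t) ++
          ((levelPaths m t).map fun q =>
            match subtreeAt? t q with
            | some s => (decompAux ε fuel s).map fun r => (q ++ r.1, r.2)
            | none => []).flatten)

/-- The vertices of the decomposition `D` of `t`. -/
noncomputable def decompVerts (ε : ℝ) (t : OTree) : List (List ℕ × ℕ) :=
  decompAux ε (height t) t

/-- The children in the decomposition tree `D` of the decomposition vertex `(p, k)`:
the top tree followed by the bottom trees in left-to-right order. -/
noncomputable def dChildren (ε : ℝ) (t : OTree) (p : List ℕ) (k : ℕ) : List (List ℕ × ℕ) :=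
  if k ≤ 1 then []
  else
    match subtreeAt? t p with
    | some s =>
      (p, cutLevel ε k) ::
        (levelPaths (cutLevel ε k) s).map fun q => (p ++ q, k - cutLevel ε k)
    | none => []

/-- The decomposition subtree `(p, k)` contains the vertex `w` of `t`;
equivalently, the leaf `{w}` of `D` lies in the subtree of `D` rooted at `(p, k)`. -/
def DContains (p : List ℕ) (k : ℕ) (w : List ℕ) : Prop :=
  p <+: w ∧ w.length < p.length + k

/-- Vertex `v` is to the left of the branch with leaf `ℓ`. -/
def LeftOfBranch (v ℓ : List ℕ) : Prop := List.Lex (· < ·) v (ℓ.take v.length)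

/-- Vertex `v` is to the right of the branch with leaf `ℓ`. -/
def RightOfBranch (v ℓ : List ℕ) : Prop := List.Lex (· < ·) (ℓ.take v.length) v

/-- Every internal vertex of `t` has at least `a` children. -/
def MinArity (t : OTree) (a : ℕ) : Prop :=
  ∀ p s, subtreeAt? t p = some s → s.children ≠ [] → a ≤ s.children.length

/-- Every internal vertex of `t` has at most `b` children. -/
def MaxArity (t : OTree) (b : ℕ) : Prop :=
  ∀ p s, subtreeAt? t p = some s → s.children.length ≤ b

/-- `w` lies on the leftmost branch descending from `v` (always taking the leftmost child). -/
def OnLeftmostBranch (v w : List ℕ) : Prop :=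
  v <+: w ∧ ∀ n (hn : n < w.length), v.length ≤ n → w.get ⟨n, hn⟩ = 0

/-- `w` lies on the rightmost branch descending from `v` (always taking the rightmost child). -/
def OnRightmostBranch (t : OTree) (v w : List ℕ) : Prop :=
  v <+: w ∧ ∀ n (hn : n < w.length), v.length ≤ n →
    ∀ s, subtreeAt? t (w.take n) = some s → w.get ⟨n, hn⟩ + 1 = s.children.length


lemma height_node (cs : List OTree) : height (.node cs) = 1 + heightList cs := by
  simp [height]

lemma height_pos (t : OTree) : 0 < height t := by
  obtain ⟨cs⟩ := t; rw [height_node]; omega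

lemma height_le_heightList {c : OTree} {cs : List OTree} (h : c ∈ cs) :
    height c ≤ heightList cs := by
  induction cs with
  | nil => simp at h
  | cons a l ih =>
    rcases List.mem_cons.1 h with rfl | h
    · simp [heightList]
    · simp only [heightList]; exact le_trans (ih h) (le_max_right _ _)

lemma exists_heightList {cs : List OTree} (h : cs ≠ []) :
    ∃ c ∈ cs, height c = heightList cs := by
  induction cs with
  | nil => simp at h
  | cons a l ih =>
    rcases eq_or_ne l [] with rfl | hl
    · exact ⟨a, by simp, by simp [heightList]⟩
    · obtain ⟨c, hc, hcc⟩ := ih hl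
      rcases le_total (heightList l) (height a) with hle | hle
      · exact ⟨a, by simp, by simp [heightList, max_eq_left hle]⟩
      · exact ⟨c, by simp [hc], by simp [heightList, hcc, max_eq_right hle]⟩

lemma children_eq_nil_of_height_le_one {t : OTree} (h : height t ≤ 1) :
    t = .node [] := by
  obtain ⟨cs⟩ := t
  rw [height_node] at h
  cases cs with
  | nil => rfl
  | cons a l =>
    exfalso
    have := height_le_heightList (List.mem_cons_self (a := a) (l := l))
    have := height_pos a
    omega

lemma subtreeAt?_nil (t : OTree) : subtreeAt? t [] = some t := rfl

lemma subtreeAt?_cons (t : OTree) (i : ℕ) (p : List ℕ) :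
    subtreeAt? t (i :: p) = (t.children[i]?).bind (fun c => subtreeAt? c p) := by
  rw [subtreeAt?]
  cases t.children[i]? <;> simp

lemma subtreeAt?_append (t : OTree) (p q : List ℕ) :
    subtreeAt? t (p ++ q) = (subtreeAt? t p).bind (fun s => subtreeAt? s q) := by
  induction p generalizing t with
  | nil => simp [subtreeAt?_nil]
  | cons i p ih =>
    simp only [List.cons_append, subtreeAt?_cons]
    cases t.children[i]? <;> simp [ih]

lemma isVertex_nil (t : OTree) : IsVertex t [] := by simp [IsVertex, subtreeAt?_nil]

lemma isVertex_of_prefix {t : OTree} {p q : List ℕ} (h : IsVertex t q) (hpq : p <+: q) :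
    IsVertex t p := by
  obtain ⟨r, rfl⟩ := hpq
  simp only [IsVertex, subtreeAt?_append] at h ⊢
  cases hs : subtreeAt? t p <;> simp [hs] at h ⊢

lemma length_lt_height {t : OTree} {p : List ℕ} (h : IsVertex t p) :
    p.length < height t := by
  induction p generalizing t with
  | nil => simpa using height_pos t
  | cons i p ih =>
    rw [IsVertex, subtreeAt?_cons] at h
    cases hc : t.children[i]? with
    | none => simp [hc] at h
    | some c =>
      rw [hc] at h; simp only [Option.bind_some] at h
      have h1 := ih (t := c) h
      have h2 : height c ≤ heightList t.children := height_le_heightList (List.mem_of_getElem? hc)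
      obtain ⟨cs⟩ := t
      rw [height_node]
      simp only [OTree.children] at h2
      simp only [List.length_cons]
      omega

lemma exists_deep_leaf (t : OTree) : ∃ p, IsLeaf t p ∧ p.length + 1 = height t := by
  suffices H : ∀ n t, height t ≤ n → ∃ p, IsLeaf t p ∧ p.length + 1 = height t from
    H (height t) t le_rfl
  intro n
  induction n with
  | zero => intro t h; exact absurd h (by have := height_pos t; omega)
  | succ n ih =>
    intro t h
    obtain ⟨cs⟩ := t
    rcases eq_or_ne cs [] with rfl | hcs
    · exact ⟨[], rfl, by simp [height_node, heightList]⟩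
    · obtain ⟨c, hc, hcc⟩ := exists_heightList hcs
      obtain ⟨i, hi, hget⟩ := List.mem_iff_getElem.1 hc
      have hhc : height c ≤ n := by rw [height_node] at h; omega
      obtain ⟨p, hp, hlen⟩ := ih c hhc
      refine ⟨i :: p, ?_, ?_⟩
      · rw [IsLeaf, subtreeAt?_cons]
        have : (OTree.node cs).children[i]? = some c := by
          simp [OTree.children, List.getElem?_eq_getElem hi, hget]
        rw [this]; simpa [IsLeaf] using hp
      · simp only [List.length_cons]
        rw [height_node, ← hcc]; omega

lemma uniform_subtree {t s : OTree} {q : List ℕ} (ht : Uniform t)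
    (hs : subtreeAt? t q = some s) : Uniform s ∧ height s + q.length = height t := by
  have key : ∀ p, IsLeaf s p → q.length + p.length + 1 = height t := by
    intro p hp
    have : IsLeaf t (q ++ p) := by
      rw [IsLeaf, subtreeAt?_append, hs]; simpa [IsLeaf] using hp
    have := ht _ this
    simp only [List.length_append] at this; omega
  obtain ⟨p₀, hp₀, hlen₀⟩ := exists_deep_leaf s
  have hh : height s + q.length = height t := by have := key p₀ hp₀; omega
  exact ⟨fun p hp => by have := key p hp; omega, hh⟩

lemma heightList_le_of_forall {cs : List OTree} {n : ℕ} (h : ∀ c ∈ cs, height c ≤ n) :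
    heightList cs ≤ n := by
  induction cs with
  | nil => simp [heightList]
  | cons a l ih =>
    simp only [heightList, max_le_iff]
    exact ⟨h a (by simp), ih fun c hc => h c (by simp [hc])⟩

lemma height_trunc_le (m : ℕ) (t : OTree) : height (trunc m t) ≤ m + 1 := by
  induction m generalizing t with
  | zero => simp [trunc, height_node, heightList]
  | succ m ih =>
    rw [trunc, height_node]
    have : heightList (t.children.map (trunc m)) ≤ m + 1 :=
      heightList_le_of_forall fun c hc => by
        obtain ⟨c', _, rfl⟩ := List.mem_map.1 hc; exact ih c'
    omega

lemma subtreeAt?_trunc {p : List ℕ} {m : ℕ} (t : OTree) (h : p.length ≤ m) :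
    subtreeAt? (trunc m t) p = (subtreeAt? t p).map (trunc (m - p.length)) := by
  induction p generalizing m t with
  | nil => simp [subtreeAt?_nil]
  | cons i p ih =>
    obtain ⟨m, rfl⟩ : ∃ m', m = m' + 1 := ⟨m - 1, by simp at h; omega⟩
    obtain ⟨cs⟩ := t
    rw [trunc, subtreeAt?_cons, subtreeAt?_cons]
    simp only [OTree.children, List.getElem?_map]
    cases hc : cs[i]? with
    | none => simp
    | some c =>
      simp only [Option.map_some, Option.bind_some]
      rw [ih c (by simp at h; omega)]
      congr 2
      simp

lemma isVertex_trunc {p : List ℕ} {m : ℕ} {t : OTree} :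
    IsVertex (trunc m t) p ↔ IsVertex t p ∧ p.length ≤ m := by
  constructor
  · intro h
    have hlt := length_lt_height h
    have hle := height_trunc_le m t
    have hpm : p.length ≤ m := by omega
    rw [IsVertex, subtreeAt?_trunc t hpm] at h
    exact ⟨by simpa [IsVertex, Option.isSome_map] using h, hpm⟩
  · rintro ⟨h, hpm⟩
    rw [IsVertex, subtreeAt?_trunc t hpm]
    simpa [IsVertex, Option.isSome_map] using h

lemma trunc_uniform {t : OTree} {m : ℕ} (ht : Uniform t) (hm : m + 1 ≤ height t) :
    Uniform (trunc m t) ∧ height (trunc m t) = m + 1 := by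
  have hht : height (trunc m t) = m + 1 := by
    obtain ⟨p₀, hp₀, hlen₀⟩ := exists_deep_leaf t
    have hp₀' : subtreeAt? t p₀ = some (.node []) := hp₀
    have hv : IsVertex t (p₀.take m) :=
      isVertex_of_prefix (by simp [IsVertex, hp₀']) (List.take_prefix _ _)
    have hlen : (p₀.take m).length = m := by simp [List.length_take]; omega
    have : IsVertex (trunc m t) (p₀.take m) := isVertex_trunc.2 ⟨hv, by omega⟩
    have := length_lt_height this
    have := height_trunc_le m t
    omega
  refine ⟨fun p hp => ?_, hht⟩
  have hp' : subtreeAt? (trunc m t) p = some (.node []) := hp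
  have hv : IsVertex (trunc m t) p := by simp [IsVertex, hp']
  have hpm : p.length ≤ m := (isVertex_trunc.1 hv).2
  rcases eq_or_lt_of_le hpm with heq | hlt
  · omega
  · exfalso
    rw [IsLeaf, subtreeAt?_trunc t hpm] at hp
    obtain ⟨s, hs, hts⟩ := Option.map_eq_some_iff.1 hp
    obtain ⟨r, hr⟩ : ∃ r, m - p.length = r + 1 := ⟨m - p.length - 1, by omega⟩
    rw [hr, trunc] at hts
    obtain ⟨cs⟩ := s
    simp only [OTree.node.injEq, OTree.children] at hts
    have : cs = [] := by simpa using congrArg List.length hts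
    subst this
    have := ht p hs
    omega

lemma mem_levelPaths {m : ℕ} {t : OTree} {q : List ℕ} :
    q ∈ levelPaths m t ↔ IsVertex t q ∧ q.length = m := by
  induction m generalizing t q with
  | zero =>
    simp only [levelPaths, List.mem_singleton]
    constructor
    · rintro rfl; exact ⟨isVertex_nil t, rfl⟩
    · rintro ⟨_, h⟩; exact List.eq_nil_of_length_eq_zero h
  | succ m ih =>
    rw [levelPaths, List.mem_flatten]
    constructor
    · rintro ⟨l, hl, hql⟩
      obtain ⟨⟨c, i⟩, hic, rfl⟩ := List.mem_map.1 hl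
      obtain ⟨q', hq', rfl⟩ := List.mem_map.1 hql
      have hic' : t.children[i]? = some c := by
        simpa using List.mem_zipIdx_iff_getElem?.1 hic
      obtain ⟨hv, hlen⟩ := ih.1 hq'
      refine ⟨?_, by simp [hlen]⟩
      rw [IsVertex, subtreeAt?_cons, hic']
      simpa [IsVertex] using hv
    · rintro ⟨hv, hlen⟩
      obtain ⟨i, q', rfl⟩ : ∃ i q', q = i :: q' := by
        cases q with
        | nil => simp at hlen
        | cons i q' => exact ⟨i, q', rfl⟩
      rw [IsVertex, subtreeAt?_cons] at hv
      cases hc : t.children[i]? with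
      | none => rw [hc] at hv; simp at hv
      | some c =>
        rw [hc] at hv; simp only [Option.bind_some] at hv
        refine ⟨(levelPaths m c).map (i :: ·), ?_, ?_⟩
        · exact List.mem_map.2 ⟨(c, i), List.mem_zipIdx_iff_getElem?.2 (by simpa using hc), rfl⟩
        · exact List.mem_map.2 ⟨q', ih.2 ⟨hv, by simpa using hlen⟩, rfl⟩

lemma nodup_levelPaths (m : ℕ) (t : OTree) : (levelPaths m t).Nodup := by
  induction m generalizing t with
  | zero => simp [levelPaths]
  | succ m ih =>
    rw [levelPaths]
    rw [List.nodup_flatten]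
    constructor
    · intro l hl
      obtain ⟨⟨c, i⟩, _, rfl⟩ := List.mem_map.1 hl
      exact (ih c).map (fun a b h => by simpa using h)
    · rw [List.pairwise_map]
      have hfst : List.Pairwise (fun a b : OTree × ℕ => a.2 ≠ b.2) t.children.zipIdx := by
        have h1 : (t.children.zipIdx.map Prod.snd).Nodup := by
          rw [List.zipIdx_map_snd]; exact List.nodup_range' (h := Nat.one_pos)
        rw [List.Nodup, List.pairwise_map] at h1
        exact h1
      refine hfst.imp ?_
      intro a b hab
      intro x hx hy
      obtain ⟨x1, _, rfl⟩ := List.mem_map.1 hx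
      obtain ⟨y1, _, h⟩ := List.mem_map.1 hy
      injection h with h1 _
      exact hab h1.symm

lemma cutLevel_pos (ε : ℝ) (h : ℕ) : 1 ≤ cutLevel ε h := le_max_right _ _

lemma cutLevel_le {ε : ℝ} (hε1 : ε ≤ 1/2) {h : ℕ} (h2 : 2 ≤ h) :
    cutLevel ε h ≤ h - 1 := by
  have hf : ⌊ε * (h : ℝ)⌋₊ ≤ h / 2 := by
    have h1 : ε * (h : ℝ) ≤ (h : ℝ) / 2 := by
      have : (0:ℝ) ≤ (h : ℝ) := by positivity
      nlinarith
    have h2' : ((h : ℝ) / 2) = (h : ℝ) / ((2:ℕ) : ℝ) := by norm_num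
    calc ⌊ε * (h : ℝ)⌋₊ ≤ ⌊(h : ℝ) / ((2:ℕ):ℝ)⌋₊ := Nat.floor_mono (by rw [← h2']; exact h1)
      _ = ⌊(h:ℝ)⌋₊ / 2 := Nat.floor_div_natCast _ _
      _ = h / 2 := by rw [Nat.floor_natCast]
  have : h / 2 ≤ h - 1 := by omega
  rw [cutLevel]
  omega

lemma indexOf_lt_of_mem_take {α : Type*} [BEq α] [LawfulBEq α] {l : List α} {m : ℕ} {a : α}
    (h : a ∈ l.take m) : l.idxOf a < m := by
  induction l generalizing m with
  | nil => simp at h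
  | cons b l ih =>
    cases m with
    | zero => simp at h
    | succ m =>
      rw [List.take_succ_cons] at h
      rw [List.idxOf_cons]
      rcases eq_or_ne b a with rfl | hba
      · simp
      · have hb : (b == a) = false := by simp [hba]
        rw [hb]
        simp only [cond_false]
        rcases List.mem_cons.1 h with rfl | h
        · exact absurd rfl hba
        · exact Nat.succ_lt_succ (ih h)

lemma mem_take_of_indexOf_lt {α : Type*} [BEq α] [LawfulBEq α] {l : List α} {m : ℕ} {a : α}
    (ha : a ∈ l) (h : l.idxOf a < m) : a ∈ l.take m := by
  induction l generalizing m with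
  | nil => simp at ha
  | cons b l ih =>
    rcases eq_or_ne b a with rfl | hba
    · cases m with
      | zero => simp [List.idxOf_cons] at h
      | succ m => simp [List.take_succ_cons]
    · rw [List.idxOf_cons] at h
      have hb : (b == a) = false := by simp [hba]
      rw [hb] at h
      simp only [cond_false] at h
      cases m with
      | zero => omega
      | succ m =>
        rw [List.take_succ_cons]
        exact List.mem_cons.2 (Or.inr (ih (List.mem_of_ne_of_mem (Ne.symm hba) ha) (by omega)))

lemma vEBAux_succ {ε : ℝ} {f : ℕ} {t : OTree} (h : ¬ height t ≤ 1) :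
    vEBAux ε (f+1) t = vEBAux ε f (trunc (cutLevel ε (height t) - 1) t) ++
        ((levelPaths (cutLevel ε (height t)) t).map fun q =>
          match subtreeAt? t q with
          | some s => (vEBAux ε f s).map (q ++ ·)
          | none => []).flatten := by
  rw [vEBAux, if_neg h]

lemma decompAux_succ {ε : ℝ} {f : ℕ} {t : OTree} (h : ¬ height t ≤ 1) :
    decompAux ε (f+1) t = ([], height t) ::
        (decompAux ε f (trunc (cutLevel ε (height t) - 1) t) ++
          ((levelPaths (cutLevel ε (height t)) t).map fun q =>
            match subtreeAt? t q with
            | some s => (decompAux ε f s).map fun r => (q ++ r.1, r.2)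
            | none => []).flatten) := by
  rw [decompAux, if_neg h]

lemma top_facts {ε : ℝ} {t : OTree} (ht : Uniform t) (hε1 : ε ≤ 1/2) (h2 : 2 ≤ height t) :
    1 ≤ cutLevel ε (height t) ∧ cutLevel ε (height t) ≤ height t - 1 ∧
    Uniform (trunc (cutLevel ε (height t) - 1) t) ∧
    height (trunc (cutLevel ε (height t) - 1) t) = cutLevel ε (height t) := by
  have h1 := cutLevel_pos ε (height t)
  have hle := cutLevel_le hε1 h2
  have := trunc_uniform (m := cutLevel ε (height t) - 1) ht (by omega)
  exact ⟨h1, hle, this.1, by omega⟩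

lemma bot_facts {ε : ℝ} {t : OTree} {q : List ℕ} (ht : Uniform t)
    (hq : q ∈ levelPaths (cutLevel ε (height t)) t) :
    ∃ s, subtreeAt? t q = some s ∧ Uniform s ∧
      height s + cutLevel ε (height t) = height t ∧ q.length = cutLevel ε (height t) := by
  obtain ⟨hv, hlen⟩ := mem_levelPaths.1 hq
  rw [IsVertex] at hv
  cases hs : subtreeAt? t q with
  | none => rw [hs] at hv; simp at hv
  | some s =>
    obtain ⟨hu, hh⟩ := uniform_subtree ht hs
    exact ⟨s, rfl, hu, by omega, hlen⟩

lemma isVertex_node_nil {w : List ℕ} : IsVertex (.node []) w ↔ w = [] := by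
  constructor
  · intro h
    cases w with
    | nil => rfl
    | cons i p =>
      rw [IsVertex, subtreeAt?_cons] at h
      simp [OTree.children] at h
  · rintro rfl; exact isVertex_nil _

lemma mem_vEBAux {ε : ℝ} (hε1 : ε ≤ 1/2) :
    ∀ f t, Uniform t → height t ≤ f → ∀ w, (w ∈ vEBAux ε f t ↔ IsVertex t w) := by
  intro f
  induction f with
  | zero => intro t _ h; exact absurd h (by have := height_pos t; omega)
  | succ f ih =>
    intro t ht hf w
    by_cases h1 : height t ≤ 1
    · have := children_eq_nil_of_height_le_one h1
      subst this
      rw [vEBAux, if_pos h1]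
      simp [isVertex_node_nil]
    · rw [vEBAux_succ h1]
      obtain ⟨hm1, hmle, hutop, hhtop⟩ := top_facts ht hε1 (by omega)
      have htopf : height (trunc (cutLevel ε (height t) - 1) t) ≤ f := by omega
      set m := cutLevel ε (height t) with hm
      rw [List.mem_append, ih _ hutop htopf, isVertex_trunc, List.mem_flatten]
      constructor
      · rintro (⟨hv, _⟩ | ⟨l, hl, hwl⟩)
        · exact hv
        · obtain ⟨q, hq, rfl⟩ := List.mem_map.1 hl
          obtain ⟨s, hs, hus, hhs, hlq⟩ := bot_facts ht hq
          rw [hs] at hwl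
          obtain ⟨w', hw', rfl⟩ := List.mem_map.1 hwl
          have : IsVertex s w' := (ih _ hus (by omega) w').1 hw'
          rw [IsVertex, subtreeAt?_append, hs]
          simpa [IsVertex] using this
      · intro hv
        by_cases hlw : w.length ≤ m - 1
        · exact Or.inl ⟨hv, hlw⟩
        · right
          have hwm : m ≤ w.length := by omega
          have hq : w.take m ∈ levelPaths m t := mem_levelPaths.2
            ⟨isVertex_of_prefix hv (List.take_prefix _ _), by simp [List.length_take]; omega⟩
          obtain ⟨s, hs, hus, hhs, _⟩ := bot_facts ht hq
          refine ⟨(vEBAux ε f s).map (w.take m ++ ·), ?_, ?_⟩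
          · refine List.mem_map.2 ⟨w.take m, hq, ?_⟩
            rw [hs]
          · refine List.mem_map.2 ⟨w.drop m, ?_, by simp⟩
            rw [ih _ hus (by omega)]
            have : IsVertex t (w.take m ++ w.drop m) := by simpa using hv
            rw [IsVertex, subtreeAt?_append, hs] at this
            simpa [IsVertex] using this

lemma drop_take_middle {α : Type*} (A B C : List α) {i n : ℕ} (h : i + n ≤ B.length) :
    ((A ++ (B ++ C)).drop (A.length + i)).take n = (B.drop i).take n := by
  rw [List.drop_append]
  rw [List.drop_eq_nil_of_le (by omega), List.nil_append]
  have h1 : A.length + i - A.length = i := by omega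
  have h3 : i - B.length = 0 := by omega
  rw [h1, List.drop_append, h3, List.drop_zero,
    List.take_append]
  have h2 : n - (B.drop i).length = 0 := by
    rw [List.length_drop]; omega
  rw [h2]
  simp

lemma take_middle {α : Type*} (A B C : List α) {i n : ℕ} (h : i + n ≤ B.length) :
    (A ++ (B ++ C)).take (A.length + (i + n)) = A ++ B.take (i + n) := by
  rw [List.take_append, List.take_of_length_le (by omega)]
  have h1 : A.length + (i + n) - A.length = i + n := by omega
  rw [h1, List.take_append]
  have h2 : i + n - B.length = 0 := by omega
  rw [h2]
  simp

lemma decompAux_bounds {ε : ℝ} (hε1 : ε ≤ 1/2) :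
    ∀ f t, Uniform t → height t ≤ f → ∀ p k, (p, k) ∈ decompAux ε f t →
      IsVertex t p ∧ 1 ≤ k ∧ p.length + k ≤ height t := by
  intro f
  induction f with
  | zero => intro t _ h; exact absurd h (by have := height_pos t; omega)
  | succ f ih =>
    intro t ht hf p k hmem
    by_cases h1 : height t ≤ 1
    · rw [decompAux, if_pos h1] at hmem
      obtain ⟨rfl, rfl⟩ : p = [] ∧ k = 1 := by
        simpa [Prod.ext_iff] using List.mem_singleton.1 hmem
      exact ⟨isVertex_nil t, le_refl 1, by have := height_pos t; simp only [List.length_nil]; omega⟩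
    · rw [decompAux_succ h1] at hmem
      obtain ⟨hm1, hmle, hutop, hhtop⟩ := top_facts ht hε1 (by omega)
      have htopf : height (trunc (cutLevel ε (height t) - 1) t) ≤ f := by omega
      rcases List.mem_cons.1 hmem with heq | hmem'
      · obtain ⟨rfl, rfl⟩ : p = [] ∧ k = height t := by simpa [Prod.ext_iff] using heq
        exact ⟨isVertex_nil t, height_pos t, by simp⟩
      rcases List.mem_append.1 hmem' with htop | hbot
      · obtain ⟨hv, hk1, hlen⟩ := ih _ hutop htopf p k htop
        refine ⟨(isVertex_trunc.1 hv).1, hk1, ?_⟩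
        rw [hhtop] at hlen
        omega
      · rw [List.mem_flatten] at hbot
        obtain ⟨l, hl, hpkl⟩ := hbot
        obtain ⟨q, hq, rfl⟩ := List.mem_map.1 hl
        obtain ⟨s, hs, hus, hhs, hlq⟩ := bot_facts ht hq
        simp only [hs] at hpkl
        obtain ⟨rr, hr, heq⟩ := List.mem_map.1 hpkl
        obtain ⟨rfl, rfl⟩ : p = q ++ rr.1 ∧ k = rr.2 := by
          simpa [Prod.ext_iff, eq_comm] using heq
        obtain ⟨hv, hk1, hlen⟩ := ih _ hus (by omega) rr.1 rr.2 hr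
        refine ⟨?_, hk1, ?_⟩
        · rw [IsVertex, subtreeAt?_append, hs]
          simpa [IsVertex] using hv
        · simp only [List.length_append]
          omega

lemma drop_take_front {α : Type*} (B C : List α) {i n : ℕ} (h : i + n ≤ B.length) :
    ((B ++ C).drop i).take n = (B.drop i).take n := by
  have := drop_take_middle ([] : List α) B C h
  simpa using this

lemma take_front {α : Type*} (B C : List α) {i n : ℕ} (h : i + n ≤ B.length) :
    (B ++ C).take (i + n) = B.take (i + n) := by
  have := take_middle ([] : List α) B C h
  simpa using this

lemma assemble {ε : ℝ} {f : ℕ} {t s : OTree} {q r1 : List ℕ} {k : ℕ}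
    (A C : List (List ℕ))
    (hs : subtreeAt? t q = some s)
    (hAu : ∀ u, IsVertex t u → (q ++ r1) <+: u → u ∉ A)
    {i n : ℕ} (hlen : i + n ≤ (vEBAux ε f s).length)
    (hblock : ∀ w, w ∈ ((vEBAux ε f s).drop i).take n ↔ (IsVertex s w ∧ DContains r1 k w))
    (hafter : ∀ u, IsVertex s u → r1 <+: u → ¬ DContains r1 k u →
      u ∉ (vEBAux ε f s).take (i + n)) :
    ∃ i' n', i' + n' ≤ (A ++ ((vEBAux ε f s).map (q ++ ·) ++ C)).length ∧
      (∀ w, w ∈ ((A ++ ((vEBAux ε f s).map (q ++ ·) ++ C)).drop i').take n' ↔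
        (IsVertex t w ∧ DContains (q ++ r1) k w)) ∧
      (∀ u, IsVertex t u → (q ++ r1) <+: u → ¬ DContains (q ++ r1) k u →
        u ∉ (A ++ ((vEBAux ε f s).map (q ++ ·) ++ C)).take (i' + n')) := by
  have hBlen : i + n ≤ ((vEBAux ε f s).map (q ++ ·)).length := by simpa using hlen
  refine ⟨A.length + i, n, ?_, ?_, ?_⟩
  · simp only [List.length_append, List.length_map]
    omega
  · intro w
    rw [drop_take_middle A _ C hBlen, ← List.map_drop, ← List.map_take]
    constructor
    · intro hw
      obtain ⟨w', hw', rfl⟩ := List.mem_map.1 hw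
      obtain ⟨hv, hpre, hlt⟩ : IsVertex s w' ∧ DContains r1 k w' := (hblock w').1 hw'
      refine ⟨?_, ?_, ?_⟩
      · rw [IsVertex, subtreeAt?_append, hs, Option.bind_some]; exact hv
      · rwa [List.prefix_append_right_inj]
      · simp only [List.length_append]; omega
    · rintro ⟨hv, hpre, hlt⟩
      have hqw : q <+: w := (List.prefix_append q r1).trans hpre
      obtain ⟨w', rfl⟩ := hqw
      have hv' : IsVertex s w' := by
        rwa [IsVertex, subtreeAt?_append, hs, Option.bind_some] at hv
      have hpre' : r1 <+: w' := (List.prefix_append_right_inj q).1 hpre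
      refine List.mem_map.2 ⟨w', (hblock w').2 ⟨hv', hpre', ?_⟩, rfl⟩
      simp only [List.length_append] at hlt; omega
  · intro u hu hpre hnc
    have harith : A.length + i + n = A.length + (i + n) := by omega
    rw [harith, take_middle A _ C hBlen]
    intro humem
    rcases List.mem_append.1 humem with hA | hB
    · exact hAu u hu hpre hA
    · rw [← List.map_take] at hB
      obtain ⟨u', hu', rfl⟩ := List.mem_map.1 hB
      have hv' : IsVertex s u' := by
        rwa [IsVertex, subtreeAt?_append, hs, Option.bind_some] at hu
      have hpre' : r1 <+: u' := (List.prefix_append_right_inj q).1 hpre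
      have hnc' : ¬ DContains r1 k u' := by
        intro ⟨h1, h2⟩
        exact hnc ⟨by rwa [List.prefix_append_right_inj], by
          simp only [List.length_append]; omega⟩
      exact hafter u' hv' hpre' hnc' hu'

lemma main_lemma {ε : ℝ} (hε1 : ε ≤ 1/2) :
    ∀ f t, Uniform t → height t ≤ f → ∀ p k, (p, k) ∈ decompAux ε f t →
      (∀ k', (p, k') ∈ decompAux ε f t → k' ≤ k) →
      ∃ i n, i + n ≤ (vEBAux ε f t).length ∧
        (∀ w, w ∈ ((vEBAux ε f t).drop i).take n ↔ (IsVertex t w ∧ DContains p k w)) ∧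
        (∀ u, IsVertex t u → p <+: u → ¬ DContains p k u →
          u ∉ (vEBAux ε f t).take (i + n)) := by
  intro f
  induction f with
  | zero => intro t _ h; exact absurd h (by have := height_pos t; omega)
  | succ f ih =>
    intro t ht hf p k hmem hmax
    by_cases h1 : height t ≤ 1
    · have htn := children_eq_nil_of_height_le_one h1
      subst htn
      rw [decompAux, if_pos h1] at hmem
      obtain ⟨rfl, rfl⟩ : p = [] ∧ k = 1 := by
        simpa [Prod.ext_iff] using List.mem_singleton.1 hmem
      rw [vEBAux, if_pos h1]
      refine ⟨0, 1, by simp, ?_, ?_⟩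
      · intro w
        simp only [List.drop_zero]
        constructor
        · intro hw
          have hwe : w = [] := by simpa using hw
          subst hwe
          exact ⟨isVertex_nil _, List.nil_prefix, by simp⟩
        · rintro ⟨hv, _, hlen⟩
          have hwe : w = [] := by simpa using hlen
          subst hwe; simp
      · intro u hu hpre hnc
        exact absurd ⟨List.nil_prefix, by simp [isVertex_node_nil.1 hu]⟩ hnc
    · rw [decompAux_succ h1] at hmem
      obtain ⟨hm1, hmle, hutop, hhtop⟩ := top_facts ht hε1 (by omega)
      have htopf : height (trunc (cutLevel ε (height t) - 1) t) ≤ f := by omega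
      rcases List.mem_cons.1 hmem with heq | hmem'
      · -- the whole tree
        obtain ⟨rfl, rfl⟩ : p = [] ∧ k = height t := by simpa [Prod.ext_iff] using heq
        refine ⟨0, (vEBAux ε (f+1) t).length, by simp, ?_, ?_⟩
        · intro w
          rw [List.drop_zero, List.take_length, mem_vEBAux hε1 (f+1) t ht hf]
          constructor
          · intro hv
            exact ⟨hv, List.nil_prefix, by simpa using length_lt_height hv⟩
          · exact fun h => h.1
        · intro u hu hpre hnc
          exact absurd ⟨List.nil_prefix, by simpa using length_lt_height hu⟩ hnc
      rcases List.mem_append.1 hmem' with htop | hbot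
      · -- in the top tree
        have hmaxtop : ∀ k',
            (p, k') ∈ decompAux ε f (trunc (cutLevel ε (height t) - 1) t) → k' ≤ k := by
          intro k' h'
          apply hmax
          rw [decompAux_succ h1]
          exact List.mem_cons_of_mem _ (List.mem_append_left _ h')
        obtain ⟨i, n, hlen, hblock, hafter⟩ := ih _ hutop htopf p k htop hmaxtop
        obtain ⟨hvp, hk1, hpk⟩ := decompAux_bounds hε1 f _ hutop htopf p k htop
        rw [hhtop] at hpk
        rw [vEBAux_succ h1]
        refine ⟨i, n, ?_, ?_, ?_⟩
        · rw [List.length_append]; omega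
        · intro w
          rw [drop_take_front _ _ hlen, hblock w]
          constructor
          · rintro ⟨hv, hdc⟩
            exact ⟨(isVertex_trunc.1 hv).1, hdc⟩
          · rintro ⟨hv, hpre, hlt⟩
            refine ⟨isVertex_trunc.2 ⟨hv, ?_⟩, hpre, hlt⟩
            have hple : p.length ≤ w.length := hpre.length_le
            omega
        · intro u hu hpre hnc
          rw [take_front _ _ hlen]
          intro humem
          have hut : u ∈ vEBAux ε f (trunc (cutLevel ε (height t) - 1) t) :=
            List.mem_of_mem_take humem
          have hvt := (mem_vEBAux hε1 f _ hutop htopf u).1 hut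
          exact hafter u hvt hpre hnc humem
      · -- in a bottom tree
        rw [List.mem_flatten] at hbot
        obtain ⟨l, hl, hpkl⟩ := hbot
        obtain ⟨q, hq, rfl⟩ := List.mem_map.1 hl
        obtain ⟨s, hs, hus, hhs, hlq⟩ := bot_facts ht hq
        simp only [hs] at hpkl
        obtain ⟨rr, hr, heq⟩ := List.mem_map.1 hpkl
        obtain ⟨rfl, rfl⟩ : p = q ++ rr.1 ∧ k = rr.2 := by
          simpa [Prod.ext_iff, eq_comm] using heq
        have hsf : height s ≤ f := by omega
        have hmaxs : ∀ k', (rr.1, k') ∈ decompAux ε f s → k' ≤ rr.2 := by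
          intro k' h'
          apply hmax
          rw [decompAux_succ h1]
          refine List.mem_cons_of_mem _ (List.mem_append_right _ ?_)
          rw [List.mem_flatten]
          refine ⟨_, List.mem_map.2 ⟨q, hq, rfl⟩, ?_⟩
          simp only [hs]
          exact List.mem_map.2 ⟨(rr.1, k'), h', rfl⟩
        obtain ⟨i, n, hlen, hblock, hafter⟩ := ih _ hus hsf rr.1 rr.2 hr hmaxs
        obtain ⟨L1, L2, hLsplit⟩ := List.append_of_mem hq
        have hnd : (levelPaths (cutLevel ε (height t)) t).Nodup := nodup_levelPaths _ _
        rw [hLsplit] at hnd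
        have hqL1 : q ∉ L1 := fun hq1 =>
          (List.nodup_append.1 hnd).2.2 q hq1 q List.mem_cons_self rfl
        rw [vEBAux_succ h1, hLsplit, List.map_append, List.map_cons, List.flatten_append,
          List.flatten_cons]
        simp only [hs]
        rw [← List.append_assoc]
        refine assemble _ _ hs ?_ hlen hblock hafter
        intro u hu hpre humem
        have hlenu : (q ++ rr.1).length ≤ u.length := hpre.length_le
        have hql : cutLevel ε (height t) ≤ u.length := by
          simp only [List.length_append] at hlenu; omega
        rcases List.mem_append.1 humem with hA | hB
        · have hvt := (mem_vEBAux hε1 f _ hutop htopf u).1 hA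
          have := (isVertex_trunc.1 hvt).2
          omega
        · rw [List.mem_flatten] at hB
          obtain ⟨l', hl', hul'⟩ := hB
          obtain ⟨q'', hq''L1, rfl⟩ := List.mem_map.1 hl'
          have hq''L : q'' ∈ levelPaths (cutLevel ε (height t)) t := by
            rw [hLsplit]; exact List.mem_append_left _ hq''L1
          obtain ⟨s'', hs'', _, _, hlq''⟩ := bot_facts ht hq''L
          simp only [hs''] at hul'
          obtain ⟨u'', hu'', rfl⟩ := List.mem_map.1 hul'
          have hq''pre : q'' <+: q'' ++ u'' := List.prefix_append _ _
          have hqpre : q <+: q'' ++ u'' := (List.prefix_append q rr.1).trans hpre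
          have heqq : q'' = q := by
            have e1 := List.prefix_iff_eq_take.1 hq''pre
            have e2 := List.prefix_iff_eq_take.1 hqpre
            rw [e1, e2, hlq, hlq'']
          exact hqL1 (heqq ▸ hq''L1)

/-- For a vertex `v` of `T`, let `T(v) = (v, k)` be the largest
decomposition subtree rooted at `v` and `S` the subtree of all descendants of `v`. Then
the vertex set of `T(v)` is a memory interval, and every vertex of `T(v)` precedes every
vertex of `S \ T(v)` in `vEB_ε(T)`: `T(v)` is the memory-first maximal memory interval
contained in `S`. -/
theorem largest_decomp_subtree_memory_first
    (ε : ℝ) (hε0 : 0 < ε) (hε1 : ε ≤ 1/2) (t : OTree) (ht : Uniform t)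
    (v : List ℕ) (hv : IsVertex t v)
    (k : ℕ) (hk : (v, k) ∈ decompVerts ε t)
    (hkmax : ∀ k', (v, k') ∈ decompVerts ε t → k' ≤ k) :
    MemInterval ε t {w | IsVertex t w ∧ DContains v k w} ∧
    ∀ w, IsVertex t w → DContains v k w →
      ∀ u, IsVertex t u → v <+: u → ¬ DContains v k u →
        pos ε t w < pos ε t u := by
  obtain ⟨i, n, hlen, hblock, hafter⟩ :=
    main_lemma hε1 (height t) t ht le_rfl v k hk hkmax
  constructor
  · exact ⟨i, n, Set.ext fun w => (hblock w).symm⟩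
  · intro w hw hdc u hu hpre hnc
    have hwmem : w ∈ ((vEBAux ε (height t) t).drop i).take n := (hblock w).2 ⟨hw, hdc⟩
    have hwtake : w ∈ (vEBAux ε (height t) t).take (i + n) := by
      rw [List.take_drop] at hwmem
      exact List.mem_of_mem_drop hwmem
    have h1 : (vEBAux ε (height t) t).idxOf w < i + n := indexOf_lt_of_mem_take hwtake
    have humem : u ∈ vEBAux ε (height t) t := (mem_vEBAux hε1 (height t) t ht le_rfl u).2 hu
    have h2 : i + n ≤ (vEBAux ε (height t) t).idxOf u := by
      by_contra hcon
      exact hafter u hu hpre hnc (mem_take_of_indexOf_lt humem (by omega))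
    simp only [pos, vEB]
    omega

end VEB
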